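/- For a weak composition a of length n, the monomial slide polynomial 𝔐_a lies in the ring of quasisymmetric polynomials QSym_n if and only if a has the form 0^k α, a strong composition α of length n−k preceded by k zeros; moreover 𝔐_{0^k α} = M_α(x_1,…,x_n), the monomial quasisymmetric polynomial. Hence the monomial slide basis lifts the monomial quasisymmetric basis of QSym_n. -/

import Mathlib

open MvPolynomial
open scoped Classical

/-- The monomial `x^b` in `n` variables, for a weak composition recorded as a list. -/
noncomputable def xlist (n : ℕ) (b : List ℕ) : MvPolynomial (Fin n) ℤ :=
  ∏ i : Fin n, X i ^ b.getD (i : ℕ) 0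

/-- Dominance order: every partial sum of `b` is at least that of `a`. -/
def DomL (b a : List ℕ) : Prop := ∀ k, (a.take k).sum ≤ (b.take k).sum

/-- The positive part of a weak composition: delete all zero entries. -/
def posL (b : List ℕ) : List ℕ := b.filter (fun x => x ≠ 0)

/-- The monomial slide polynomial `𝔐_a` of a weak composition `a` of length `n`:
the sum of `x^b` over weak compositions `b` of length `n` with `b ≥ a` in dominance
order and `b⁺ = a⁺`. -/
noncomputable def MSlide (n : ℕ) (a : List ℕ) : MvPolynomial (Fin n) ℤ :=
  ∑ᶠ (b : List ℕ) (_ : b.length = n ∧ DomL b a ∧ posL b = posL a), xlist n b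

/-- The monomial quasisymmetric polynomial `M_α(x_1, …, x_n)`. -/
noncomputable def Mq (n : ℕ) (α : List ℕ) : MvPolynomial (Fin n) ℤ :=
  ∑ᶠ (b : List ℕ) (_ : b.length = n ∧ posL b = α), xlist n b

/-- The ring (here: ℤ-submodule) `QSym_n` of quasisymmetric polynomials in
`x_1, …, x_n`: the span of the monomial quasisymmetric polynomials. -/
noncomputable def QSymn (n : ℕ) : Submodule ℤ (MvPolynomial (Fin n) ℤ) :=
  Submodule.span ℤ {f | ∃ α : List ℕ, (∀ x ∈ α, 0 < x) ∧ f = Mq n α}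

-- auxiliary
noncomputable def vecL (n : ℕ) (b : List ℕ) : Fin n →₀ ℕ :=
  Finsupp.equivFunOnFinite.symm fun i => b.getD (i : ℕ) 0

lemma xlist_eq (n : ℕ) (b : List ℕ) : xlist n b = monomial (vecL n b) 1 := by
  rw [xlist, monomial_eq, C_1, one_mul, Finsupp.prod_pow]
  simp [vecL]

lemma vecL_inj {n : ℕ} {b c : List ℕ} (hb : b.length = n) (hc : c.length = n)
    (h : vecL n b = vecL n c) : b = c := by
  apply List.ext_getElem (hb.trans hc.symm)
  intro i h1 h2
  have h3 : i < n := hb ▸ h1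
  have h4 := DFunLike.congr_fun h ⟨i, h3⟩
  simp only [vecL, Finsupp.coe_equivFunOnFinite_symm] at h4
  rwa [List.getD_eq_getElem _ _ h1, List.getD_eq_getElem _ _ h2] at h4

lemma finite_bdd (M : ℕ) : ∀ n, {b : List ℕ | b.length = n ∧ ∀ x ∈ b, x ≤ M}.Finite := by
  intro n
  induction n with
  | zero =>
    apply Set.Finite.subset (Set.finite_singleton ([] : List ℕ))
    rintro b ⟨hb, -⟩
    simp [List.length_eq_zero_iff] at hb
    simp [hb]
  | succ n ih =>
    apply Set.Finite.subset (Set.Finite.image2 List.cons (Set.finite_Iic M) ih)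
    rintro b ⟨hb, hx⟩
    cases b with
    | nil => simp at hb
    | cons y t =>
      exact Set.mem_image2_of_mem (hx y (by simp))
        ⟨by simpa using hb, fun x hxx => hx x (by simp [hxx])⟩

lemma finite_posL (n : ℕ) (α : List ℕ) : {b : List ℕ | b.length = n ∧ posL b = α}.Finite := by
  apply (finite_bdd α.sum n).subset
  rintro b ⟨hb, hp⟩
  refine ⟨hb, fun x hx => ?_⟩
  rcases Nat.eq_zero_or_pos x with h | h
  · omega
  · have hm : x ∈ posL b := List.mem_filter.2 ⟨hx, by simpa using h.ne'⟩
    rw [hp] at hm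
    exact List.single_le_sum (fun _ _ => Nat.zero_le _) _ hm

lemma coeff_finsum_mem (n : ℕ) (S : Set (List ℕ)) (hfin : S.Finite)
    (hlen : ∀ b ∈ S, b.length = n) {b0 : List ℕ} (h0 : b0.length = n) :
    coeff (vecL n b0) (∑ᶠ b ∈ S, xlist n b) = if b0 ∈ S then 1 else 0 := by
  classical
  rw [finsum_mem_eq_finite_toFinset_sum _ hfin, MvPolynomial.coeff_sum]
  have : ∀ b ∈ hfin.toFinset, coeff (vecL n b0) (xlist n b) = if b = b0 then 1 else 0 := by
    intro b hbm
    rw [xlist_eq, coeff_monomial]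
    have hbS : b ∈ S := hfin.mem_toFinset.1 hbm
    by_cases hbb : b = b0
    · subst hbb; simp
    · rw [if_neg hbb, if_neg (fun h => hbb (vecL_inj (hlen b hbS) h0 h))]
  rw [Finset.sum_congr rfl this, Finset.sum_ite_eq' hfin.toFinset b0 (fun _ => (1 : ℤ))]
  simp [hfin.mem_toFinset]
lemma sum_posL (l : List ℕ) : (posL l).sum = l.sum := by
  induction l with
  | nil => rfl
  | cons x t ih =>
    by_cases hx : x = 0 <;> simp [posL, List.filter_cons, hx] at ih ⊢ <;> omega

lemma sum_take_mono (l : List ℕ) {i j : ℕ} (h : i ≤ j) :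
    (l.take i).sum ≤ (l.take j).sum := by
  conv_rhs => rw [← List.take_append_drop i (l.take j)]
  rw [List.sum_append, List.take_take, Nat.min_eq_left h]
  exact Nat.le_add_right _ _

lemma sum_take_le (l : List ℕ) (i : ℕ) : (l.take i).sum ≤ l.sum := by
  conv_rhs => rw [← List.take_append_drop i l]
  rw [List.sum_append]
  exact Nat.le_add_right _ _

lemma posL_take_eq (l : List ℕ) (m : ℕ) :
    posL (l.take m) = (posL l).take (posL (l.take m)).length := by
  have h : posL (l.take m) <+: posL l := (List.take_prefix m l).filter _
  exact List.prefix_iff_eq_take.mp h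

lemma length_posL_add (l : List ℕ) :
    (posL l).length + List.countP (fun x => decide (x = 0)) l = l.length := by
  induction l with
  | nil => rfl
  | cons x t ih =>
    by_cases hx : x = 0 <;>
      simp [posL, List.filter_cons, List.countP_cons, hx] at ih ⊢ <;> omega

lemma posL_append (l m : List ℕ) : posL (l ++ m) = posL l ++ posL m :=
  List.filter_append ..

lemma posL_replicate_zero (k : ℕ) : posL (List.replicate k 0) = [] := by
  simp [posL]

lemma posL_of_pos {α : List ℕ} (hα : ∀ x ∈ α, 0 < x) : posL α = α :=
  List.filter_eq_self.2 (fun x hx => by simpa using (hα x hx).ne')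

lemma posL_pos {l : List ℕ} : ∀ x ∈ posL l, 0 < x := fun x hx =>
  Nat.pos_of_ne_zero (by simpa using List.of_mem_filter hx)

lemma posL_posL (l : List ℕ) : posL (posL l) = posL l := posL_of_pos posL_pos

lemma posL_length_le (l : List ℕ) : (posL l).length ≤ l.length :=
  List.length_filter_le _ _

/-- b₁ = 0^k ++ α has minimal partial sums among words with positive part α. -/
lemma dom_min {n k : ℕ} {α b : List ℕ} (hk : k + α.length = n)
    (hb : b.length = n) (hpb : posL b = α) :
    DomL b (List.replicate k 0 ++ α) := by
  intro m
  have hL : ((List.replicate k 0 ++ α).take m).sum = (α.take (m - k)).sum := by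
    rw [List.take_append, List.sum_append]
    simp
  rw [hL]
  set j := (posL (b.take m)).length with hj
  have hpre : posL (b.take m) = α.take j := by rw [← hpb]; exact posL_take_eq b m
  have h1 : (α.take j).sum ≤ (b.take m).sum := by
    rw [← hpre, sum_posL]
  refine le_trans ?_ h1
  -- counting: j ≥ min m n - k
  have hz : (posL b).length + List.countP (fun x => decide (x = 0)) b = b.length :=
    length_posL_add b
  have hzk : List.countP (fun x => decide (x = 0)) b = k := by
    rw [hpb] at hz; omega
  have hzt : List.countP (fun x => decide (x = 0)) (b.take m) ≤ k := by
    rw [← hzk]; exact (List.take_sublist m b).countP_le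
  have hzt2 : j + List.countP (fun x => decide (x = 0)) (b.take m) = (b.take m).length := by
    rw [hj]; exact length_posL_add _
  have hlt : (b.take m).length = min m n := by rw [List.length_take, hb]
  have hjge : min m n - k ≤ j := by omega
  have hjα : j ≤ α.length := by
    have h2 := congrArg List.length hpre
    rw [List.length_take] at h2
    omega
  rcases le_or_gt m n with hmn | hmn
  · exact sum_take_mono α (by omega)
  · have hbm : b.take m = b := List.take_of_length_le (by omega)
    have : j = α.length := by
      rw [hj, hbm, hpb]
    rw [this, List.take_of_length_le (le_refl _)]
    exact sum_take_le α _
lemma dom_max {n : ℕ} {a : List ℕ} (ha : a.length = n) :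
    DomL (posL a ++ List.replicate (n - (posL a).length) 0) a := by
  intro m
  have hR : ((posL a).take m).sum
      ≤ ((posL a ++ List.replicate (n - (posL a).length) 0).take m).sum := by
    rw [List.take_append, List.sum_append]
    exact Nat.le_add_right _ _
  refine le_trans ?_ hR
  have h1 : (a.take m).sum = ((posL a).take (posL (a.take m)).length).sum := by
    rw [← posL_take_eq, sum_posL]
  rw [h1]
  refine sum_take_mono _ (le_trans (posL_length_le _) ?_)
  rw [List.length_take]
  omega

lemma eq_of_sum_take {a b : List ℕ} (hl : a.length = b.length)
    (h : ∀ m, (a.take m).sum = (b.take m).sum) : a = b := by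
  apply List.ext_getElem hl
  intro i h1 h2
  have e1 := List.sum_take_succ a i h1
  have e2 := List.sum_take_succ b i h2
  have e3 := h i
  have e4 := h (i + 1)
  omega

lemma coeff_Mq {n : ℕ} (α : List ℕ) {b : List ℕ} (hb : b.length = n) :
    coeff (vecL n b) (Mq n α) = if posL b = α then 1 else 0 := by
  have h : Mq n α = ∑ᶠ c ∈ {c : List ℕ | c.length = n ∧ posL c = α}, xlist n c := rfl
  rw [h, coeff_finsum_mem n _ (finite_posL n α) (fun c hc => hc.1) hb]
  simp [Set.mem_setOf_eq, hb]

lemma coeff_MSlide {n : ℕ} (a : List ℕ) {b : List ℕ} (hb : b.length = n) :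
    coeff (vecL n b) (MSlide n a) = if DomL b a ∧ posL b = posL a then 1 else 0 := by
  have h : MSlide n a
      = ∑ᶠ c ∈ {c : List ℕ | c.length = n ∧ DomL c a ∧ posL c = posL a}, xlist n c := rfl
  have hfin : {c : List ℕ | c.length = n ∧ DomL c a ∧ posL c = posL a}.Finite :=
    (finite_posL n (posL a)).subset (fun c hc => ⟨hc.1, hc.2.2⟩)
  rw [h, coeff_finsum_mem n _ hfin (fun c hc => hc.1) hb]
  simp [Set.mem_setOf_eq, hb]

lemma qsym_coeff_eq {n : ℕ} {f : MvPolynomial (Fin n) ℤ} (hf : f ∈ QSymn n)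
    {b c : List ℕ} (hb : b.length = n) (hc : c.length = n) (hp : posL b = posL c) :
    coeff (vecL n b) f = coeff (vecL n c) f := by
  induction hf using Submodule.span_induction with
  | mem g hg => obtain ⟨α, -, rfl⟩ := hg; rw [coeff_Mq α hb, coeff_Mq α hc, hp]
  | zero => simp
  | add x y hx hy ihx ihy => simp only [coeff_add, ihx, ihy]
  | smul r x hx ihx => simp only [coeff_smul, ihx]

lemma mslide_eq_Mq {n k : ℕ} {α : List ℕ} (hα : ∀ x ∈ α, 0 < x) (hk : k + α.length = n) :
    MSlide n (List.replicate k 0 ++ α) = Mq n α := by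
  have hpa : posL (List.replicate k 0 ++ α) = α := by
    rw [posL_append, posL_replicate_zero, posL_of_pos hα, List.nil_append]
  have hset : {b : List ℕ | b.length = n ∧ DomL b (List.replicate k 0 ++ α)
        ∧ posL b = posL (List.replicate k 0 ++ α)}
      = {b : List ℕ | b.length = n ∧ posL b = α} := by
    ext b
    simp only [Set.mem_setOf_eq, hpa]
    constructor
    · rintro ⟨h1, -, h3⟩; exact ⟨h1, h3⟩
    · rintro ⟨h1, h2⟩; exact ⟨h1, dom_min hk h1 h2, h2⟩
  have h1 : MSlide n (List.replicate k 0 ++ α)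
      = ∑ᶠ b ∈ {b : List ℕ | b.length = n ∧ DomL b (List.replicate k 0 ++ α)
          ∧ posL b = posL (List.replicate k 0 ++ α)}, xlist n b := rfl
  rw [h1, hset]
  rfl


/-- For a weak composition `a` of length `n`, the monomial slide polynomial `𝔐_a` is
quasisymmetric if and only if `a = 0^k α` for a strong composition `α` of length `n - k`;
moreover `𝔐_{0^k α} = M_α(x_1, …, x_n)`.  Hence the monomial slide basis lifts the
monomial quasisymmetric basis of `QSym_n`. -/
theorem mslide_lifts_monomial (n : ℕ) (a : List ℕ) (ha : a.length = n) :
    (MSlide n a ∈ QSymn n ↔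
      ∃ (k : ℕ) (α : List ℕ), (∀ x ∈ α, 0 < x) ∧ k + α.length = n ∧
        a = List.replicate k 0 ++ α) ∧
    (∀ (k : ℕ) (α : List ℕ), (∀ x ∈ α, 0 < x) → k + α.length = n →
      a = List.replicate k 0 ++ α → MSlide n a = Mq n α) := by
  constructor
  · constructor
    · intro hq
      set α := posL a with hα
      have hαlen : α.length ≤ n := ha ▸ posL_length_le a
      set k := n - α.length with hkdef
      have hk : k + α.length = n := by omega
      refine ⟨k, α, posL_pos, hk, ?_⟩
      set b0 : List ℕ := α ++ List.replicate k 0 with hb0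
      set b1 : List ℕ := List.replicate k 0 ++ α with hb1
      have hb0len : b0.length = n := by
        rw [hb0, List.length_append, List.length_replicate]; omega
      have hb1len : b1.length = n := by
        rw [hb1, List.length_append, List.length_replicate]; omega
      have hpb0 : posL b0 = α := by
        rw [hb0, posL_append, posL_replicate_zero, List.append_nil, hα, posL_posL]
      have hpb1 : posL b1 = α := by
        rw [hb1, posL_append, posL_replicate_zero, List.nil_append, hα, posL_posL]
      have c0 : coeff (vecL n b0) (MSlide n a) = 1 := by
        rw [coeff_MSlide a hb0len, if_pos ⟨dom_max ha, hpb0.trans hα⟩]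
      have c1 : coeff (vecL n b1) (MSlide n a) = 1 := by
        rw [qsym_coeff_eq hq hb1len hb0len (hpb1.trans hpb0.symm)]
        exact c0
      have hb1dom : DomL b1 a := by
        by_contra hcon
        rw [coeff_MSlide a hb1len, if_neg (fun h => hcon h.1)] at c1
        exact one_ne_zero c1.symm
      have hadom : DomL a b1 := dom_min hk ha hα.symm
      exact eq_of_sum_take (by omega)
        (fun m => le_antisymm (hb1dom m) (hadom m))
    · rintro ⟨k, α, h1, h2, rfl⟩
      rw [mslide_eq_Mq h1 h2]
      exact Submodule.subset_span ⟨α, h1, rfl⟩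
  · rintro k α h1 h2 rfl
    exact mslide_eq_Mq h1 h2
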